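/- arXiv:1609.08037 — 2 statements merged into one kernel-verified Lean document; each statement's English description precedes it below -/
import Mathlib

section
/- Let X be an ℝ^q-valued random variable with mean 0, covariance matrix Σ with smallest eigenvalue λ₁ > 0, and finite third moment E|X|³. Let χ be the characteristic function of X. Then for every s with |s| ≤ λ₁ / max(1, E|X|³), one has |χ(s)| ≤ exp(-(1/4) s·Σs). Consequently, if ψ_m(z) = χ(m^{-1/2} z)^m, then |ψ_m(z)| ≤ exp(-(1/4) z·Σz) for |z| ≤ m^{1/2} λ₁ / max(1, E|X|³). -/
open MeasureTheory

section AuxStmt6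
open Finset Complex

lemma exp_taylor_nonneg (n : ℕ) : ∀ t : ℝ, 0 ≤ t →
    ‖Complex.exp (t * Complex.I) - ∑ k ∈ Finset.range n, (t * Complex.I) ^ k / k.factorial‖
      ≤ t ^ n / n.factorial := by
  induction n with
  | zero => intro t ht; simp [Complex.norm_exp_ofReal_mul_I]
  | succ n ih =>
    intro t ht
    set F : ℝ → ℂ := fun u =>
      Complex.exp (u * Complex.I) - ∑ k ∈ Finset.range (n+1), (u * Complex.I) ^ k / k.factorial
      with hF
    set G : ℝ → ℂ := fun u =>
      Complex.I * (Complex.exp (u * Complex.I) -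
        ∑ k ∈ Finset.range n, (u * Complex.I) ^ k / k.factorial) with hG
    have hbase : ∀ u : ℝ, HasDerivAt (fun v : ℝ => (v : ℂ) * Complex.I) Complex.I u := by
      intro u
      simpa using (Complex.ofRealCLM.hasDerivAt (x := u)).mul_const Complex.I
    have hderiv : ∀ u : ℝ, HasDerivAt F (G u) u := by
      intro u
      have h1 : HasDerivAt (fun v : ℝ => Complex.exp (v * Complex.I))
          (Complex.exp (u * Complex.I) * Complex.I) u := (hbase u).cexp
      have h2 : HasDerivAt (fun v : ℝ =>
          ∑ k ∈ Finset.range (n+1), ((v:ℂ) * Complex.I) ^ k / k.factorial)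
          (∑ k ∈ Finset.range (n+1),
            ((k : ℂ) * ((u : ℂ) * Complex.I) ^ (k-1) * (1 * Complex.I)) / k.factorial) u :=
        HasDerivAt.fun_sum (fun k _ =>
          ((((hasDerivAt_id ((u:ℂ))).mul_const Complex.I).pow k).comp_ofReal).div_const _)
      have hsum : (∑ k ∈ Finset.range (n+1),
            ((k : ℂ) * ((u : ℂ) * Complex.I) ^ (k-1) * (1 * Complex.I)) / k.factorial)
          = Complex.I * ∑ k ∈ Finset.range n, ((u : ℂ) * Complex.I) ^ k / k.factorial := by
        rw [Finset.sum_range_succ', Finset.mul_sum]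
        simp only [Nat.cast_zero, zero_mul, zero_div, add_zero]
        apply Finset.sum_congr rfl
        intro k _
        have h3 : ((k.factorial : ℂ)) ≠ 0 := Nat.cast_ne_zero.mpr (Nat.factorial_ne_zero _)
        have hk : ((k:ℂ)+1) ≠ 0 := by intro h; exact_mod_cast h
        simp only [Nat.add_sub_cancel, one_mul, Nat.factorial_succ]
        push_cast
        rw [show ((k:ℂ)+1) * (((u:ℂ) * Complex.I)) ^ k * Complex.I
            = ((k:ℂ)+1) * ((((u:ℂ) * Complex.I)) ^ k * Complex.I) from by ring,
          mul_div_mul_left _ _ hk]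
        rw [mul_comm Complex.I, mul_div_assoc]
        ring
      have h := h1.fun_sub h2
      rw [hsum] at h
      refine h.congr_deriv ?_
      simp only [hG]
      ring
    have hF0 : F 0 = 0 := by
      simp [hF, Finset.sum_range_succ']
    have hcont : Continuous G := by
      apply Continuous.mul continuous_const
      apply Continuous.sub
      · exact Complex.continuous_exp.comp (by continuity)
      · apply continuous_finset_sum
        intro k _
        exact ((Complex.continuous_ofReal.mul continuous_const).pow k).div_const _
    have hFTC : ∫ u in (0:ℝ)..t, G u = F t - F 0 :=
      intervalIntegral.integral_eq_sub_of_hasDerivAt (fun u _ => hderiv u)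
        (hcont.intervalIntegrable _ _)
    have hbound : ‖∫ u in (0:ℝ)..t, G u‖ ≤ |∫ u in (0:ℝ)..t, u ^ n / n.factorial| := by
      apply intervalIntegral.norm_integral_le_abs_of_norm_le
      · filter_upwards [ae_restrict_mem measurableSet_uIoc] with u hu
        rw [Set.uIoc_of_le ht] at hu
        have hu0 : 0 ≤ u := le_of_lt hu.1
        calc ‖G u‖ = ‖Complex.exp (u * Complex.I) -
              ∑ k ∈ Finset.range n, ((u:ℂ) * Complex.I) ^ k / k.factorial‖ := by
                rw [hG]; simp [norm_mul]
          _ ≤ u ^ n / n.factorial := ih u hu0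
      · exact ((continuous_pow n).div_const _).intervalIntegrable _ _
    have hval : ∫ u in (0:ℝ)..t, u ^ n / (n.factorial:ℝ) = t ^ (n+1) / (n+1).factorial := by
      rw [intervalIntegral.integral_div, integral_pow]
      rw [Nat.factorial_succ]
      push_cast
      rw [div_div]
      norm_num
    have : ‖F t‖ ≤ t ^ (n+1) / (n+1).factorial := by
      rw [show F t = F t - F 0 by rw [hF0]; ring, ← hFTC]
      calc ‖∫ u in (0:ℝ)..t, G u‖ ≤ |∫ u in (0:ℝ)..t, u ^ n / n.factorial| := hbound
        _ = t ^ (n+1) / (n+1).factorial := by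
            rw [hval]; exact _root_.abs_of_nonneg (by positivity)
    exact this

lemma exp_taylor (n : ℕ) (t : ℝ) :
    ‖Complex.exp (t * Complex.I) - ∑ k ∈ Finset.range n, (t * Complex.I) ^ k / k.factorial‖
      ≤ |t| ^ n / n.factorial := by
  rcases le_total 0 t with ht | ht
  · rw [_root_.abs_of_nonneg ht]; exact exp_taylor_nonneg n t ht
  · have key : (starRingEnd ℂ) (Complex.exp ((-t : ℝ) * Complex.I) -
        ∑ k ∈ Finset.range n, (((-t : ℝ) : ℂ) * Complex.I) ^ k / k.factorial)
        = Complex.exp (t * Complex.I) -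
          ∑ k ∈ Finset.range n, ((t:ℂ) * Complex.I) ^ k / k.factorial := by
      rw [map_sub, map_sum, ← Complex.exp_conj]
      congr 1
      · congr 1
        simp [Complex.conj_ofReal]
      · apply Finset.sum_congr rfl
        intro k _
        rw [map_div₀, map_pow, map_mul]
        simp [Complex.conj_ofReal]
    have h := exp_taylor_nonneg n (-t) (by linarith)
    rw [← key, RCLike.norm_conj]
    calc ‖Complex.exp ((-t : ℝ) * Complex.I) -
          ∑ k ∈ Finset.range n, (((-t : ℝ) : ℂ) * Complex.I) ^ k / k.factorial‖
        ≤ (-t) ^ n / n.factorial := h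
      _ = |t| ^ n / n.factorial := by rw [abs_of_nonpos ht]

variable {q : ℕ} {μ : Measure (EuclideanSpace ℝ (Fin q))} [IsProbabilityMeasure μ]




lemma aux_int1 (hm3 : Integrable (fun x => ‖x‖ ^ 3) μ) :
    Integrable (fun x : EuclideanSpace ℝ (Fin q) => ‖x‖) μ := by
  refine Integrable.mono' (g := fun x => 1 + ‖x‖ ^ 3) ((integrable_const 1).add hm3)
    continuous_norm.aestronglyMeasurable ?_
  filter_upwards with x
  rw [Real.norm_of_nonneg (norm_nonneg x)]
  rcases le_total ‖x‖ 1 with h | h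
  · nlinarith [norm_nonneg x, pow_nonneg (norm_nonneg x) 3]
  · nlinarith [le_self_pow₀ h (three_ne_zero)]

lemma aux_int2 (hm3 : Integrable (fun x => ‖x‖ ^ 3) μ) :
    Integrable (fun x : EuclideanSpace ℝ (Fin q) => ‖x‖ ^ 2) μ := by
  refine Integrable.mono' (g := fun x => 1 + ‖x‖ ^ 3) ((integrable_const 1).add hm3)
    (continuous_norm.pow 2).aestronglyMeasurable ?_
  filter_upwards with x
  rw [Real.norm_of_nonneg (by positivity)]
  rcases le_total ‖x‖ 1 with h | h
  · nlinarith [norm_nonneg x, pow_nonneg (norm_nonneg x) 3]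
  · nlinarith [pow_le_pow_right₀ h (by norm_num : 2 ≤ 3)]

lemma aux_cont_inner (s : EuclideanSpace ℝ (Fin q)) :
    Continuous (fun x : EuclideanSpace ℝ (Fin q) => (inner ℝ s x : ℝ)) :=
  continuous_const.inner continuous_id

lemma aux_int_t2 (hm3 : Integrable (fun x => ‖x‖ ^ 3) μ) (s : EuclideanSpace ℝ (Fin q)) :
    Integrable (fun x => (inner ℝ s x : ℝ) ^ 2) μ := by
  refine Integrable.mono' ((aux_int2 hm3).const_mul (‖s‖ ^ 2))
    (((aux_cont_inner s).pow 2).aestronglyMeasurable) ?_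
  filter_upwards with x
  rw [Real.norm_of_nonneg (by positivity)]
  have h := abs_real_inner_le_norm s x
  have h2 := abs_nonneg (inner ℝ s x : ℝ)
  nlinarith [_root_.sq_abs (inner ℝ s x : ℝ), norm_nonneg x, norm_nonneg s]

lemma aux_int_t (hm3 : Integrable (fun x => ‖x‖ ^ 3) μ) (s : EuclideanSpace ℝ (Fin q)) :
    Integrable (fun x => (inner ℝ s x : ℝ)) μ := by
  refine Integrable.mono' ((aux_int1 hm3).const_mul ‖s‖)
    ((aux_cont_inner s).aestronglyMeasurable) ?_
  filter_upwards with x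
  rw [Real.norm_eq_abs]
  exact abs_real_inner_le_norm s x

lemma aux_int_t3 (hm3 : Integrable (fun x => ‖x‖ ^ 3) μ) (s : EuclideanSpace ℝ (Fin q)) :
    Integrable (fun x => |(inner ℝ s x : ℝ)| ^ 3) μ := by
  refine Integrable.mono' (hm3.const_mul (‖s‖ ^ 3))
    ((((aux_cont_inner s).abs).pow 3).aestronglyMeasurable) ?_
  filter_upwards with x
  rw [Real.norm_of_nonneg (by positivity)]
  have h := abs_real_inner_le_norm s x
  have h2 := abs_nonneg (inner ℝ s x : ℝ)
  calc |(inner ℝ s x : ℝ)| ^ 3 ≤ (‖s‖ * ‖x‖) ^ 3 := by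
        exact pow_le_pow_left₀ h2 h 3
    _ = ‖s‖ ^ 3 * ‖x‖ ^ 3 := by ring

-- Hölder: (∫‖x‖²)³ ≤ (∫‖x‖³)²
lemma aux_holder (hm3 : Integrable (fun x => ‖x‖ ^ 3) μ) :
    (∫ x, ‖x‖ ^ 2 ∂μ) ^ 3 ≤ (∫ x, ‖x‖ ^ 3 ∂μ) ^ 2 := by
  have hM2 : (0:ℝ) ≤ ∫ x, ‖x‖ ^ 2 ∂μ := integral_nonneg fun x => by positivity
  have hM3 : (0:ℝ) ≤ ∫ x, ‖x‖ ^ 3 ∂μ := integral_nonneg fun x => by positivity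
  have hpq : Real.HolderConjugate (3/2) 3 := Real.holderConjugate_iff.mpr ⟨by norm_num, by norm_num⟩
  have hfm : AEStronglyMeasurable (fun x : EuclideanSpace ℝ (Fin q) => ‖x‖ ^ 2) μ :=
    (continuous_norm.pow 2).aestronglyMeasurable
  have hof : (ENNReal.ofReal (3/2 : ℝ)).toReal = 3/2 := ENNReal.toReal_ofReal (by norm_num)
  have hrpow : ∀ x : EuclideanSpace ℝ (Fin q), (‖x‖ ^ 2 : ℝ) ^ (3/2 : ℝ) = ‖x‖ ^ 3 := by
    intro x
    rw [← Real.rpow_natCast ‖x‖ 2, ← Real.rpow_mul (norm_nonneg x),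
      show ((2:ℕ):ℝ) * (3/2) = ((3:ℕ):ℝ) by norm_num, Real.rpow_natCast]
  have hf : MemLp (fun x : EuclideanSpace ℝ (Fin q) => ‖x‖ ^ 2)
      (ENNReal.ofReal (3/2)) μ := by
    have h1 : MemLp (fun x : EuclideanSpace ℝ (Fin q) =>
        ‖(‖x‖ ^ 2 : ℝ)‖ ^ (ENNReal.ofReal (3/2 : ℝ)).toReal) 1 μ := by
      rw [memLp_one_iff_integrable]
      refine hm3.congr ?_
      filter_upwards with x
      rw [hof, Real.norm_of_nonneg (by positivity), hrpow]
    have hne0 : ENNReal.ofReal (3/2 : ℝ) ≠ 0 := (ENNReal.ofReal_pos.mpr (by norm_num)).ne'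
    have hone : (ENNReal.ofReal (3/2 : ℝ) / ENNReal.ofReal (3/2 : ℝ)) = 1 :=
      ENNReal.div_self hne0 ENNReal.ofReal_ne_top
    have h1' : MemLp (fun x : EuclideanSpace ℝ (Fin q) =>
        ‖(‖x‖ ^ 2 : ℝ)‖ ^ (ENNReal.ofReal (3/2 : ℝ)).toReal)
        (ENNReal.ofReal (3/2 : ℝ) / ENNReal.ofReal (3/2 : ℝ)) μ := by rw [hone]; exact h1
    exact (memLp_norm_rpow_iff hfm hne0 ENNReal.ofReal_ne_top).mp h1'
  have hg : MemLp (fun _ : EuclideanSpace ℝ (Fin q) => (1:ℝ)) (ENNReal.ofReal 3) μ :=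
    memLp_const 1
  have key := integral_mul_le_Lp_mul_Lq_of_nonneg (μ := μ) hpq
    (f := fun x => ‖x‖ ^ 2) (g := fun _ => 1)
    (Filter.Eventually.of_forall fun x => by positivity)
    (Filter.Eventually.of_forall fun x => zero_le_one) hf hg
  rw [integral_const, probReal_univ] at key
  simp only [smul_eq_mul, mul_one, ENNReal.toReal_one, Real.one_rpow, one_mul] at key
  have hcongr : ∫ x, (‖x‖ ^ 2 : ℝ) ^ (3/2 : ℝ) ∂μ = ∫ x, ‖x‖ ^ 3 ∂μ :=
    integral_congr_ae (Filter.Eventually.of_forall fun x => hrpow x)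
  rw [hcongr] at key
  have key2 : ∫ x, ‖x‖ ^ 2 ∂μ ≤ (∫ x, ‖x‖ ^ 3 ∂μ) ^ (2/3 : ℝ) := by
    convert key using 2
    norm_num
  calc (∫ x, ‖x‖ ^ 2 ∂μ) ^ 3 ≤ ((∫ x, ‖x‖ ^ 3 ∂μ) ^ (2/3 : ℝ)) ^ 3 :=
        pow_le_pow_left₀ hM2 key2 3
    _ = (∫ x, ‖x‖ ^ 3 ∂μ) ^ 2 := by
        rw [← Real.rpow_natCast ((∫ x, ‖x‖ ^ 3 ∂μ) ^ (2/3 : ℝ)) 3,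
          ← Real.rpow_mul hM3, show (2/3:ℝ) * ((3:ℕ):ℝ) = ((2:ℕ):ℝ) by norm_num,
          Real.rpow_natCast]



lemma aux_core (μ : Measure (EuclideanSpace ℝ (Fin q))) [IsProbabilityMeasure μ]
    (hmean : ∫ x, x ∂μ = 0)
    (hm3 : Integrable (fun x => ‖x‖ ^ 3) μ)
    (Q : EuclideanSpace ℝ (Fin q) → ℝ)
    (hQ : ∀ s, Q s = ∫ x, (inner ℝ s x : ℝ) ^ 2 ∂μ)
    (lam1 : ℝ) (hlam1 : 0 < lam1)
    (hlow : ∀ s : EuclideanSpace ℝ (Fin q), lam1 * ‖s‖ ^ 2 ≤ Q s)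
    (hattain : ∃ s : EuclideanSpace ℝ (Fin q), ‖s‖ = 1 ∧ Q s = lam1)
    (χ : EuclideanSpace ℝ (Fin q) → ℂ)
    (hχ : ∀ s, χ s = ∫ x, Complex.exp (((inner ℝ s x : ℝ) : ℂ) * Complex.I) ∂μ)
    (s : EuclideanSpace ℝ (Fin q))
    (hs : ‖s‖ ≤ lam1 / max 1 (∫ x, ‖x‖ ^ 3 ∂μ)) :
    ‖χ s‖ ≤ Real.exp (-(1/4) * Q s) := by
  set M2 := ∫ x, ‖x‖ ^ 2 ∂μ with hM2def
  set M3 := ∫ x, ‖x‖ ^ 3 ∂μ with hM3def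
  set K := max 1 M3 with hKdef
  have hK1 : (1:ℝ) ≤ K := le_max_left _ _
  have hM3K : M3 ≤ K := le_max_right _ _
  have hKpos : (0:ℝ) < K := lt_of_lt_of_le one_pos hK1
  have hM3nn : (0:ℝ) ≤ M3 := integral_nonneg fun x => by positivity
  have hM2nn : (0:ℝ) ≤ M2 := integral_nonneg fun x => by positivity
  have hQ0 : 0 ≤ Q s := by
    rw [hQ]; exact integral_nonneg fun x => by positivity
  -- λ₁ ≤ M₂
  have hlamM2 : lam1 ≤ M2 := by
    obtain ⟨s₀, hs₀, hQs₀⟩ := hattain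
    rw [← hQs₀, hQ]
    apply integral_mono (aux_int_t2 hm3 s₀) (aux_int2 hm3)
    intro x
    dsimp only
    have h := abs_real_inner_le_norm s₀ x
    rw [hs₀, one_mul] at h
    calc (inner ℝ s₀ x : ℝ) ^ 2 = |(inner ℝ s₀ x : ℝ)| ^ 2 := (_root_.sq_abs _).symm
      _ ≤ ‖x‖ ^ 2 := pow_le_pow_left₀ (abs_nonneg _) h 2
  -- Q s ≤ ‖s‖² M₂
  have hQle : Q s ≤ ‖s‖ ^ 2 * M2 := by
    rw [hQ]
    calc ∫ x, (inner ℝ s x : ℝ) ^ 2 ∂μ ≤ ∫ x, ‖s‖ ^ 2 * ‖x‖ ^ 2 ∂μ := by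
          apply integral_mono (aux_int_t2 hm3 s) ((aux_int2 hm3).const_mul _)
          intro x
          dsimp only
          have h := abs_real_inner_le_norm s x
          calc (inner ℝ s x : ℝ) ^ 2 = |(inner ℝ s x : ℝ)| ^ 2 := (_root_.sq_abs _).symm
            _ ≤ (‖s‖ * ‖x‖) ^ 2 := pow_le_pow_left₀ (abs_nonneg _) h 2
            _ = ‖s‖ ^ 2 * ‖x‖ ^ 2 := by ring
      _ = ‖s‖ ^ 2 * M2 := integral_const_mul _ _
  have hsK : ‖s‖ * K ≤ lam1 := (le_div_iff₀ hKpos).mp hs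
  -- Q s ≤ 1
  have hB1 : Q s ≤ 1 := by
    have h1 : (‖s‖ * K) ^ 2 ≤ lam1 ^ 2 := by
      apply pow_le_pow_left₀ (by positivity) hsK
    have h2 : lam1 ^ 2 ≤ M2 ^ 2 := by
      apply pow_le_pow_left₀ hlam1.le hlamM2
    have h3 : Q s * K ^ 2 ≤ M2 ^ 3 := by
      calc Q s * K ^ 2 ≤ (‖s‖ ^ 2 * M2) * K ^ 2 :=
            mul_le_mul_of_nonneg_right hQle (by positivity)
        _ = (‖s‖ * K) ^ 2 * M2 := by ring
        _ ≤ lam1 ^ 2 * M2 := mul_le_mul_of_nonneg_right h1 hM2nn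
        _ ≤ M2 ^ 2 * M2 := mul_le_mul_of_nonneg_right h2 hM2nn
        _ = M2 ^ 3 := by ring
    have h5 : M3 ^ 2 ≤ K ^ 2 := pow_le_pow_left₀ hM3nn hM3K 2
    have h6 : Q s * K ^ 2 ≤ 1 * K ^ 2 := by
      have := aux_holder (μ := μ) hm3
      rw [← hM2def, ← hM3def] at this
      nlinarith
    exact le_of_mul_le_mul_right (by linarith) (by positivity : (0:ℝ) < K ^ 2)
  -- third moment of t bound
  have hIt3 : ∫ x, |(inner ℝ s x : ℝ)| ^ 3 ∂μ ≤ Q s := by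
    have step1 : ∫ x, |(inner ℝ s x : ℝ)| ^ 3 ∂μ ≤ ‖s‖ ^ 3 * M3 := by
      calc ∫ x, |(inner ℝ s x : ℝ)| ^ 3 ∂μ ≤ ∫ x, ‖s‖ ^ 3 * ‖x‖ ^ 3 ∂μ := by
            apply integral_mono (aux_int_t3 hm3 s) (hm3.const_mul _)
            intro x
            dsimp only
            have h := abs_real_inner_le_norm s x
            calc |(inner ℝ s x : ℝ)| ^ 3 ≤ (‖s‖ * ‖x‖) ^ 3 :=
                  pow_le_pow_left₀ (abs_nonneg _) h 3
              _ = ‖s‖ ^ 3 * ‖x‖ ^ 3 := by ring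
        _ = ‖s‖ ^ 3 * M3 := integral_const_mul _ _
    have hsM3 : ‖s‖ * M3 ≤ lam1 := by
      calc ‖s‖ * M3 ≤ ‖s‖ * K := mul_le_mul_of_nonneg_left hM3K (norm_nonneg s)
        _ ≤ lam1 := hsK
    have step2 : ‖s‖ ^ 3 * M3 ≤ lam1 * ‖s‖ ^ 2 := by
      calc ‖s‖ ^ 3 * M3 = (‖s‖ * M3) * ‖s‖ ^ 2 := by ring
        _ ≤ lam1 * ‖s‖ ^ 2 :=
          mul_le_mul_of_nonneg_right hsM3 (by positivity)
    exact step1.trans (step2.trans (hlow s))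
  -- Taylor estimate
  have hIexp : Integrable (fun x => Complex.exp (((inner ℝ s x : ℝ) : ℂ) * Complex.I)) μ := by
    refine Integrable.mono' (integrable_const 1) ?_ ?_
    · exact (Complex.continuous_exp.comp
        ((Complex.continuous_ofReal.comp (aux_cont_inner s)).mul
          continuous_const)).aestronglyMeasurable
    · filter_upwards with x
      rw [Complex.norm_exp_ofReal_mul_I]
  have hIa : Integrable (fun x => Complex.I * ((inner ℝ s x : ℝ) : ℂ)) μ :=
    ((aux_int_t hm3 s).ofReal).const_mul Complex.I
  have hIb : Integrable (fun x => (((inner ℝ s x : ℝ) ^ 2 : ℝ) : ℂ) / 2) μ :=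
    ((aux_int_t2 hm3 s).ofReal).div_const 2
  set g : EuclideanSpace ℝ (Fin q) → ℂ :=
    fun x => 1 + Complex.I * ((inner ℝ s x : ℝ) : ℂ) - (((inner ℝ s x : ℝ) ^ 2 : ℝ) : ℂ) / 2
    with hgdef
  have hIg : Integrable g μ := ((integrable_const 1).add hIa).sub hIb
  have hsum_eq : ∀ x : EuclideanSpace ℝ (Fin q),
      (∑ k ∈ Finset.range 3, ((((inner ℝ s x : ℝ)) : ℂ) * Complex.I) ^ k / k.factorial) = g x := by
    intro x
    rw [Finset.sum_range_succ, Finset.sum_range_succ, Finset.sum_range_one, hgdef]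
    simp only [pow_zero, pow_one, Nat.factorial]
    push_cast
    rw [mul_pow, Complex.I_sq]
    ring
  have hts0 : ∫ x, (inner ℝ s x : ℝ) ∂μ = 0 := by
    have hid : Integrable (fun x : EuclideanSpace ℝ (Fin q) => x) μ :=
      (integrable_norm_iff aestronglyMeasurable_id).mp (aux_int1 hm3)
    have := integral_inner (𝕜 := ℝ) hid s
    rw [hmean, inner_zero_right] at this
    exact this
  have hgval : ∫ x, g x ∂μ = 1 - ((Q s : ℝ) : ℂ) / 2 := by
    have hIc : Integrable (fun x : EuclideanSpace ℝ (Fin q) =>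
        1 + Complex.I * ((inner ℝ s x : ℝ) : ℂ)) μ := (integrable_const 1).add hIa
    rw [hgdef]
    rw [integral_sub hIc hIb, integral_add (integrable_const 1) hIa]
    have e1 : ∫ x, ((inner ℝ s x : ℝ) : ℂ) ∂μ = ((∫ x, (inner ℝ s x : ℝ) ∂μ : ℝ) : ℂ) :=
      integral_ofReal
    have e2 : ∫ x, (((inner ℝ s x : ℝ) ^ 2 : ℝ) : ℂ) ∂μ
        = ((∫ x, (inner ℝ s x : ℝ) ^ 2 ∂μ : ℝ) : ℂ) := integral_ofReal
    rw [integral_const, probReal_univ, integral_const_mul, integral_div, e1, e2, hts0, hQ]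
    simp
  have hdiff : χ s - (1 - ((Q s : ℝ) : ℂ) / 2)
      = ∫ x, (Complex.exp (((inner ℝ s x : ℝ) : ℂ) * Complex.I) - g x) ∂μ := by
    rw [integral_sub hIexp hIg, hgval, hχ s]
  have htay : ‖χ s - (1 - ((Q s : ℝ) : ℂ) / 2)‖ ≤ (∫ x, |(inner ℝ s x : ℝ)| ^ 3 ∂μ) / 6 := by
    rw [hdiff]
    calc ‖∫ x, (Complex.exp (((inner ℝ s x : ℝ) : ℂ) * Complex.I) - g x) ∂μ‖
        ≤ ∫ x, ‖Complex.exp (((inner ℝ s x : ℝ) : ℂ) * Complex.I) - g x‖ ∂μ :=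
          norm_integral_le_integral_norm _
      _ ≤ ∫ x, |(inner ℝ s x : ℝ)| ^ 3 / 6 ∂μ := by
          apply integral_mono (hIexp.sub hIg).norm ((aux_int_t3 hm3 s).div_const 6)
          intro x
          simp only [Pi.sub_apply]
          rw [← hsum_eq x]
          have h := exp_taylor 3 (inner ℝ s x : ℝ)
          have h6 : ((Nat.factorial 3 : ℕ) : ℝ) = 6 := by norm_num [Nat.factorial]
          rw [h6] at h
          exact h
      _ = (∫ x, |(inner ℝ s x : ℝ)| ^ 3 ∂μ) / 6 := integral_div _ _
  -- assemble
  have hnorm1 : ‖(1 : ℂ) - ((Q s : ℝ) : ℂ) / 2‖ = 1 - Q s / 2 := by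
    have heq : (1 : ℂ) - ((Q s : ℝ) : ℂ) / 2 = (((1 - Q s / 2 : ℝ)) : ℂ) := by push_cast; ring
    rw [heq, Complex.norm_real, Real.norm_of_nonneg (by linarith)]
  have hfinal : ‖χ s‖ ≤ 1 - Q s / 3 := by
    calc ‖χ s‖ = ‖(1 - ((Q s : ℝ) : ℂ) / 2) + (χ s - (1 - ((Q s : ℝ) : ℂ) / 2))‖ := by
          congr 1; ring
      _ ≤ ‖(1 : ℂ) - ((Q s : ℝ) : ℂ) / 2‖ + ‖χ s - (1 - ((Q s : ℝ) : ℂ) / 2)‖ :=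
          norm_add_le _ _
      _ ≤ (1 - Q s / 2) + (∫ x, |(inner ℝ s x : ℝ)| ^ 3 ∂μ) / 6 := by
          rw [hnorm1]; exact add_le_add_right htay _
      _ ≤ (1 - Q s / 2) + Q s / 6 := by
          have := hIt3; linarith
      _ = 1 - Q s / 3 := by ring
  have hexp : 1 - Q s / 3 ≤ Real.exp (-(1/4) * Q s) := by
    have h1 : 1 - Q s / 3 ≤ Real.exp (-(Q s / 3)) := by
      have := Real.add_one_le_exp (-(Q s / 3)); linarith
    have h2 : Real.exp (-(Q s / 3)) ≤ Real.exp (-(1/4) * Q s) :=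
      Real.exp_le_exp.mpr (by linarith)
    linarith
  linarith


end AuxStmt6

/-- for `X ∼ μ` mean zero, with covariance quadratic form
`Q s = s·Σs = ∫ ⟪s,x⟫² dμ` whose smallest eigenvalue is `λ₁ > 0`
(expressed via `λ₁‖s‖² ≤ Q s` and attainment), and finite third moment,
the characteristic function satisfies `|χ s| ≤ exp(-Q s / 4)` for
`‖s‖ ≤ λ₁ / max 1 (E|X|³)`, and consequently
`|ψ_m z| = |χ(m^{-1/2} z)^m| ≤ exp(-z·Σz/4)` for `‖z‖ ≤ √m · λ₁ / max 1 (E|X|³)`. -/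
theorem stmt_6 (q : ℕ) (μ : Measure (EuclideanSpace ℝ (Fin q))) [IsProbabilityMeasure μ]
    (hmean : ∫ x, x ∂μ = 0)
    (hm3 : Integrable (fun x => ‖x‖ ^ 3) μ)
    (Q : EuclideanSpace ℝ (Fin q) → ℝ)
    (hQ : ∀ s, Q s = ∫ x, (inner ℝ s x : ℝ) ^ 2 ∂μ)
    (lam1 : ℝ) (hlam1 : 0 < lam1)
    (hlow : ∀ s : EuclideanSpace ℝ (Fin q), lam1 * ‖s‖ ^ 2 ≤ Q s)
    (hattain : ∃ s : EuclideanSpace ℝ (Fin q), ‖s‖ = 1 ∧ Q s = lam1)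
    (χ : EuclideanSpace ℝ (Fin q) → ℂ)
    (hχ : ∀ s, χ s = ∫ x, Complex.exp (((inner ℝ s x : ℝ) : ℂ) * Complex.I) ∂μ) :
    (∀ s : EuclideanSpace ℝ (Fin q),
      ‖s‖ ≤ lam1 / max 1 (∫ x, ‖x‖ ^ 3 ∂μ) →
        ‖χ s‖ ≤ Real.exp (-(1/4) * Q s)) ∧
    (∀ m : ℕ, 0 < m → ∀ z : EuclideanSpace ℝ (Fin q),
      ‖z‖ ≤ Real.sqrt m * lam1 / max 1 (∫ x, ‖x‖ ^ 3 ∂μ) →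
        ‖χ (((m : ℝ) ^ (-(1:ℝ)/2)) • z) ^ m‖ ≤ Real.exp (-(1/4) * Q z)) := by
  constructor
  · intro s hs
    exact aux_core μ hmean hm3 Q hQ lam1 hlam1 hlow hattain χ hχ s hs
  · intro m hm z hz
    set K := max 1 (∫ x, ‖x‖ ^ 3 ∂μ) with hKdef
    set c := (m : ℝ) ^ (-(1:ℝ)/2) with hcdef
    have hK1 : (1:ℝ) ≤ K := le_max_left _ _
    have hKpos : (0:ℝ) < K := lt_of_lt_of_le one_pos hK1
    have hmpos : (0:ℝ) < m := Nat.cast_pos.mpr hm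
    have hcpos : 0 < c := Real.rpow_pos_of_pos hmpos _
    have hsqrtpos : 0 < Real.sqrt m := Real.sqrt_pos.mpr hmpos
    have hceq : c = (Real.sqrt m)⁻¹ := by
      rw [hcdef, show (-(1:ℝ)/2) = -(1/2) by norm_num, Real.rpow_neg hmpos.le,
        ← Real.sqrt_eq_rpow]
    have hc2 : c ^ 2 = ((m : ℝ))⁻¹ := by
      rw [hceq, inv_pow, Real.sq_sqrt hmpos.le]
    have hcz : ‖c • z‖ ≤ lam1 / K := by
      rw [norm_smul, Real.norm_of_nonneg hcpos.le]
      calc c * ‖z‖ ≤ c * (Real.sqrt m * lam1 / K) :=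
            mul_le_mul_of_nonneg_left hz hcpos.le
        _ = (c * Real.sqrt m) * (lam1 / K) := by ring
        _ = lam1 / K := by rw [hceq, inv_mul_cancel₀ hsqrtpos.ne', one_mul]
    have hQcz : Q (c • z) = c ^ 2 * Q z := by
      rw [hQ (c • z), hQ z, ← integral_const_mul]
      have heq : (fun x => (inner ℝ (c • z) x : ℝ) ^ 2)
          = fun x => c ^ 2 * (inner ℝ z x : ℝ) ^ 2 := by
        funext x
        rw [real_inner_smul_left]
        ring
      rw [heq]
    have hkey := aux_core μ hmean hm3 Q hQ lam1 hlam1 hlow hattain χ hχ (c • z) hcz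
    calc ‖χ (c • z) ^ m‖ = ‖χ (c • z)‖ ^ m := norm_pow _ _
      _ ≤ (Real.exp (-(1/4) * Q (c • z))) ^ m :=
          pow_le_pow_left₀ (norm_nonneg _) hkey m
      _ = Real.exp (m * (-(1/4) * Q (c • z))) := (Real.exp_nat_mul _ m).symm
      _ = Real.exp (-(1/4) * Q z) := by
          rw [hQcz, hc2]
          congr 1
          field_simp
end

section
/- Let Σ_r = ∫_{Ω_r} x x^⊤ ν(dx), where Ω_r = {2^{-r-1} < |x| ≤ 2^{-r}} and ν is finite on Ω_r with ν_r = ν(Ω_r) > 0. Suppose there exist ρ > 0 and γ ∈ (0,1) such that |∫_{Ω_r} cos(2^r s·x) ν(dx)| ≤ γ ν_r for all |s| ≥ ρ. Then for every unit vector v ∈ ℝ^q, v·Σ_r v ≥ 2^{-2r+1} ρ^{-2} (1-γ) ν_r; in particular the smallest eigenvalue λ_{1,r} of Σ_r satisfies λ_{1,r} ≥ 2^{-2r+1} ρ^{-2} (1-γ) ν_r. -/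
open MeasureTheory

/-- under the uniform Cramér-type bound
`|∫_{Ω_r} cos(2^r s·x) ν(dx)| ≤ γ ν_r` for `|s| ≥ ρ`, every unit vector `v`
satisfies `v·Σ_r v = ∫_{Ω_r} ⟨v,x⟩² ν(dx) ≥ 2^{-2r+1} ρ^{-2} (1-γ) ν_r`; in
particular the smallest eigenvalue `λ_{1,r}` of `Σ_r` (the minimum of the
Rayleigh quotient over unit vectors) satisfies the same lower bound. -/
theorem stmt_19 (q : ℕ) (hq : 0 < q) (r : ℕ)
    (ν : Measure (EuclideanSpace ℝ (Fin q))) [IsFiniteMeasure ν]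
    (Ω : Set (EuclideanSpace ℝ (Fin q)))
    (hΩ : Ω = {x | (2 : ℝ) ^ (-(r : ℝ) - 1) < ‖x‖ ∧ ‖x‖ ≤ (2 : ℝ) ^ (-(r : ℝ))})
    (hν : 0 < (ν Ω).toReal)
    (ρ γ : ℝ) (hρ : 0 < ρ) (hγ0 : 0 < γ) (hγ1 : γ < 1)
    (hcos : ∀ s : EuclideanSpace ℝ (Fin q), ρ ≤ ‖s‖ →
      |∫ x in Ω, Real.cos ((2 : ℝ) ^ (r : ℕ) * (inner ℝ s x : ℝ)) ∂ν| ≤ γ * (ν Ω).toReal) :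
    (∀ v : EuclideanSpace ℝ (Fin q), ‖v‖ = 1 →
      (∫ x in Ω, (inner ℝ v x : ℝ) ^ 2 ∂ν)
        ≥ (2 : ℝ) ^ (-2 * (r : ℝ) + 1) * ρ⁻¹ ^ 2 * (1 - γ) * (ν Ω).toReal) ∧
    ∀ lam1 : ℝ,
      IsLeast {t : ℝ | ∃ v : EuclideanSpace ℝ (Fin q), ‖v‖ = 1 ∧
          t = ∫ x in Ω, (inner ℝ v x : ℝ) ^ 2 ∂ν} lam1 →
        lam1 ≥ (2 : ℝ) ^ (-2 * (r : ℝ) + 1) * ρ⁻¹ ^ 2 * (1 - γ) * (ν Ω).toReal := by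
  have hΩm : MeasurableSet Ω := by
    rw [hΩ]
    exact (measurableSet_lt measurable_const measurable_norm).inter
      (measurableSet_le measurable_norm measurable_const)
  set c : ℝ := (2 : ℝ) ^ (-2 * (r : ℝ) + 1) * ρ⁻¹ ^ 2 with hc
  have h2r : (0:ℝ) < (2:ℝ) ^ (r:ℕ) := by positivity
  have hcval : c = 2 * ((2:ℝ) ^ (r:ℕ))⁻¹ ^ 2 * ρ⁻¹ ^ 2 := by
    rw [hc]
    congr 1
    rw [show (-2 * (r : ℝ) + 1) = 1 - ((2*r : ℕ) : ℝ) by push_cast; ring,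
      Real.rpow_sub (by norm_num), Real.rpow_one, Real.rpow_natCast]
    rw [pow_mul']
    field_simp
  have hcpos : 0 < c := by rw [hcval]; positivity
  have key : ∀ v : EuclideanSpace ℝ (Fin q), ‖v‖ = 1 →
      (∫ x in Ω, (inner ℝ v x : ℝ) ^ 2 ∂ν) ≥ c * (1 - γ) * (ν Ω).toReal := by
    intro v hv
    set s : EuclideanSpace ℝ (Fin q) := ρ • v with hs
    have hsn : ‖s‖ = ρ := by rw [hs, norm_smul, hv, Real.norm_eq_abs, abs_of_pos hρ, mul_one]
    have hI := hcos s (le_of_eq hsn.symm)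
    have hinner : ∀ x, (inner ℝ s x : ℝ) = ρ * (inner ℝ v x : ℝ) := fun x => real_inner_smul_left v x ρ
    -- integrabilities
    have hcos_int : Integrable (fun x => Real.cos ((2 : ℝ) ^ (r:ℕ) * (inner ℝ s x : ℝ))) (ν.restrict Ω) := by
      apply (integrable_const (1:ℝ)).mono'
      · exact (Real.continuous_cos.comp (continuous_const.mul (continuous_const.inner continuous_id))).aestronglyMeasurable
      · filter_upwards with x using Real.abs_cos_le_one _
    have hsq_int : Integrable (fun x => (inner ℝ v x : ℝ) ^ 2) (ν.restrict Ω) := by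
      apply (integrable_const (((2:ℝ) ^ (-(r:ℝ)))^2)).mono'
      · exact ((continuous_const.inner continuous_id).pow 2).aestronglyMeasurable
      · rw [ae_restrict_iff' hΩm]
        filter_upwards with x hx
        have hxn : ‖x‖ ≤ (2:ℝ) ^ (-(r:ℝ)) := by rw [hΩ] at hx; exact hx.2
        have h1 : |(inner ℝ v x : ℝ)| ≤ ‖x‖ := by
          calc |(inner ℝ v x : ℝ)| ≤ ‖v‖ * ‖x‖ := abs_real_inner_le_norm v x
          _ = ‖x‖ := by rw [hv, one_mul]
        rw [Real.norm_eq_abs, abs_pow]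
        calc |(inner ℝ v x : ℝ)| ^ 2 ≤ ‖x‖ ^ 2 := by
              exact pow_le_pow_left₀ (abs_nonneg _) h1 2
          _ ≤ ((2:ℝ) ^ (-(r:ℝ)))^2 := by
              exact pow_le_pow_left₀ (norm_nonneg _) hxn 2
    -- pointwise bound
    have hpt : ∀ x, c * (1 - Real.cos ((2 : ℝ) ^ (r:ℕ) * (inner ℝ s x : ℝ))) ≤ (inner ℝ v x : ℝ) ^ 2 := by
      intro x
      set u := (inner ℝ v x : ℝ)
      have hb := Real.one_sub_sq_div_two_le_cos (x := (2 : ℝ) ^ (r:ℕ) * (inner ℝ s x : ℝ))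
      have : 1 - Real.cos ((2 : ℝ) ^ (r:ℕ) * (inner ℝ s x : ℝ)) ≤ ((2 : ℝ) ^ (r:ℕ) * (ρ * u)) ^ 2 / 2 := by
        rw [← hinner x]; linarith
      calc c * (1 - Real.cos ((2 : ℝ) ^ (r:ℕ) * (inner ℝ s x : ℝ)))
          ≤ c * (((2 : ℝ) ^ (r:ℕ) * (ρ * u)) ^ 2 / 2) := by
            exact mul_le_mul_of_nonneg_left this hcpos.le
        _ = u ^ 2 := by
            rw [hcval]; field_simp
    -- integrate
    have hint : ∫ x in Ω, c * (1 - Real.cos ((2 : ℝ) ^ (r:ℕ) * (inner ℝ s x : ℝ))) ∂ν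
        ≤ ∫ x in Ω, (inner ℝ v x : ℝ) ^ 2 ∂ν := by
      apply integral_mono _ hsq_int (fun x => hpt x)
      exact (((integrable_const (1:ℝ)).sub hcos_int).const_mul c).congr (by
        filter_upwards with x; simp [Pi.sub_apply])
    have hval : ∫ x in Ω, c * (1 - Real.cos ((2 : ℝ) ^ (r:ℕ) * (inner ℝ s x : ℝ))) ∂ν
        = c * ((ν Ω).toReal - ∫ x in Ω, Real.cos ((2 : ℝ) ^ (r:ℕ) * (inner ℝ s x : ℝ)) ∂ν) := by
      rw [integral_const_mul, integral_sub (integrable_const 1) hcos_int, setIntegral_const, smul_eq_mul, mul_one, measureReal_def]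
    have hIle : ∫ x in Ω, Real.cos ((2 : ℝ) ^ (r:ℕ) * (inner ℝ s x : ℝ)) ∂ν ≤ γ * (ν Ω).toReal :=
      (le_abs_self _).trans hI
    have : c * (1 - γ) * (ν Ω).toReal ≤ c * ((ν Ω).toReal - ∫ x in Ω, Real.cos ((2 : ℝ) ^ (r:ℕ) * (inner ℝ s x : ℝ)) ∂ν) := by
      have : (1 - γ) * (ν Ω).toReal ≤ (ν Ω).toReal - ∫ x in Ω, Real.cos ((2 : ℝ) ^ (r:ℕ) * (inner ℝ s x : ℝ)) ∂ν := by
        nlinarith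
      nlinarith
    linarith [hval ▸ hint]
  refine ⟨key, fun lam1 hl => ?_⟩
  obtain ⟨v, hv, hveq⟩ := hl.1
  exact hveq ▸ key v hv
end
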